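/- For the greedy compressing algorithm on a synchronizing DFA: at every step with current subset S of size ≥ 2, there exists a word w of length at most C(n−|S|+2, 2) with |Sw| < |S|; consequently the greedy algorithm terminates with a reset word of length at most the sum over m = 2..n of C(n−m+2, 2) = (n³−n)/6. -/
import Mathlib

open Finset Polynomial

/-- Action of a word on a state. -/
def actW {Q A : Type*} (δ : Q → A → Q) (q : Q) (w : List A) : Q := w.foldl δ q

/-- Image of the full state set under a word. -/
def img {Q A : Type*} [Fintype Q] [DecidableEq Q] (δ : Q → A → Q) (w : List A) : Finset Q :=
  Finset.univ.image (fun q => actW δ q w)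

/-- Frankl's skew Bollobás-type bound for pairs. -/
lemma frankl_pairs {Q : Type*} [Fintype Q] [DecidableEq Q] {t k : ℕ}
    (S : Fin k → Finset Q) (p q : Fin k → Q)
    (hcard : ∀ i, ((S i)ᶜ).card = t)
    (hp : ∀ i, p i ∈ S i) (hq : ∀ i, q i ∈ S i)
    (hskew : ∀ i j, i < j → p j ∉ S i ∨ q j ∉ S i) :
    k ≤ (t + 2).choose 2 := by
  obtain ⟨x, hx⟩ : ∃ x : Q → ℝ, Function.Injective x :=
    ⟨fun a => ((Fintype.equivFin Q a : ℕ) : ℝ), fun a b h =>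
      (Fintype.equivFin Q).injective (Fin.ext (Nat.cast_injective h))⟩
  set P : Fin k → Polynomial ℝ := fun i => ∏ r ∈ (S i)ᶜ, (X - C (x r)) with hP
  have hdeg : ∀ i, (P i).natDegree < t + 1 := by
    intro i
    have : (P i).natDegree = t := by
      rw [hP]
      rw [natDegree_prod_of_monic _ _ (fun r _ => monic_X_sub_C (x r))]
      simp [natDegree_X_sub_C, hcard i]
    omega
  have heval : ∀ i (z : ℝ), (P i).eval z = ∏ r ∈ (S i)ᶜ, (z - x r) := by
    intro i z; rw [hP]; simp [eval_prod]
  have heval_ne : ∀ i (a : Q), a ∈ S i → (P i).eval (x a) ≠ 0 := by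
    intro i a ha
    rw [heval]
    rw [Finset.prod_ne_zero_iff]
    intro r hr
    have : r ≠ a := fun h => by simp [h, ha] at hr
    intro h0
    exact this (hx (by linarith [sub_eq_zero.mp h0])).symm
  have heval_zero : ∀ i (a : Q), a ∉ S i → (P i).eval (x a) = 0 := by
    intro i a ha
    rw [heval]
    exact Finset.prod_eq_zero (Finset.mem_compl.mpr ha) (by ring)
  set M : Fin k → (Sym2 (Fin (t+1)) → ℝ) := fun i =>
    Sym2.lift ⟨fun r s => (P i).coeff r * (P i).coeff s, fun r s => mul_comm _ _⟩ with hM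
  set pairing : Fin k → (Sym2 (Fin (t+1)) → ℝ) → ℝ := fun i y =>
    ∑ r : Fin (t+1), ∑ s : Fin (t+1), y s(r, s) * (x (p i)) ^ (r : ℕ) * (x (q i)) ^ (s : ℕ)
    with hpair
  have hpairM : ∀ i j, pairing i (M j) = (P j).eval (x (p i)) * (P j).eval (x (q i)) := by
    intro i j
    rw [eval_eq_sum_range' (hdeg j), eval_eq_sum_range' (hdeg j)]
    rw [Finset.sum_mul_sum]
    rw [← Fin.sum_univ_eq_sum_range (fun r => ∑ s ∈ Finset.range (t+1),
      ((P j).coeff r * (x (p i)) ^ r) * ((P j).coeff s * (x (q i)) ^ s))]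
    rw [hpair]
    refine Finset.sum_congr rfl fun r _ => ?_
    rw [← Fin.sum_univ_eq_sum_range]
    refine Finset.sum_congr rfl fun s _ => ?_
    simp [hM, Sym2.lift_mk]
    ring
  have hLI : LinearIndependent ℝ M := by
    rw [Fintype.linearIndependent_iff]
    intro g hg
    by_contra hcon
    push_neg at hcon
    obtain ⟨i0, hi0⟩ := hcon
    have hne : (Finset.univ.filter (fun j => g j ≠ 0)).Nonempty :=
      ⟨i0, by simp [hi0]⟩
    set i := (Finset.univ.filter (fun j => g j ≠ 0)).max' hne with hi
    have hgi : g i ≠ 0 := (Finset.mem_filter.mp (Finset.max'_mem _ hne)).2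
    have hmax : ∀ j, g j ≠ 0 → j ≤ i := fun j hj =>
      Finset.le_max' _ _ (by simp [hj])
    have h0 : pairing i (∑ j, g j • M j) = 0 := by
      rw [hg, hpair]; simp
    have hlin : pairing i (∑ j, g j • M j) = ∑ j, g j * pairing i (M j) := by
      rw [hpair]
      simp only
      have hy : ∀ z : Sym2 (Fin (t+1)), (∑ j, g j • M j) z = ∑ j, g j * M j z := by
        intro z; rw [Finset.sum_apply]; simp
      simp only [hy, Finset.sum_mul]
      have h1 : ∀ r : Fin (t+1),
          (∑ s : Fin (t+1), ∑ j, g j * M j s(r,s) * x (p i) ^ (r:ℕ) * x (q i) ^ (s:ℕ))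
          = ∑ j, ∑ s : Fin (t+1), g j * M j s(r,s) * x (p i) ^ (r:ℕ) * x (q i) ^ (s:ℕ) :=
        fun r => Finset.sum_comm
      simp only [h1]
      rw [Finset.sum_comm]
      refine Finset.sum_congr rfl fun j _ => ?_
      rw [Finset.mul_sum]
      refine Finset.sum_congr rfl fun r _ => ?_
      rw [Finset.mul_sum]
      refine Finset.sum_congr rfl fun s _ => ?_
      ring
    have hsingle : ∑ j, g j * pairing i (M j) = g i * pairing i (M i) := by
      refine Finset.sum_eq_single i (fun j _ hji => ?_) (by simp)
      rcases lt_or_gt_of_ne hji with h | h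
      · rcases hskew j i h with hh | hh
        · rw [hpairM, heval_zero j _ hh]; simp
        · rw [hpairM, heval_zero j _ hh]; simp
      · by_contra hne'
        have : g j ≠ 0 := fun hz => hne' (by rw [hz, zero_mul])
        exact absurd (hmax j this) (not_le.mpr h)
    have hdiag : pairing i (M i) ≠ 0 := by
      rw [hpairM]
      exact mul_ne_zero (heval_ne i _ (hp i)) (heval_ne i _ (hq i))
    rw [hlin, hsingle] at h0
    exact (mul_ne_zero hgi hdiag) h0
  have := hLI.fintype_card_le_finrank
  rw [Module.finrank_pi] at this
  simpa [Sym2.card] using this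

lemma actW_append {Q A : Type*} (δ : Q → A → Q) (q : Q) (u v : List A) :
    actW δ q (u ++ v) = actW δ (actW δ q u) v := List.foldl_append ..

lemma image_actW_append {Q A : Type*} [DecidableEq Q] (δ : Q → A → Q) (S : Finset Q)
    (u v : List A) :
    S.image (fun q => actW δ q (u ++ v))
      = (S.image (fun q => actW δ q u)).image (fun q => actW δ q v) := by
  rw [Finset.image_image]
  exact Finset.image_congr fun a _ => (actW_append δ a u v)

lemma img_append {Q A : Type*} [Fintype Q] [DecidableEq Q] (δ : Q → A → Q) (u v : List A) :
    img δ (u ++ v) = (img δ u).image (fun q => actW δ q v) := by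
  rw [img, img, ← image_actW_append]

lemma card_image_lt {Q B : Type*} [DecidableEq Q] [DecidableEq B] {S : Finset Q} {f : Q → B}
    {a b : Q} (ha : a ∈ S) (hb : b ∈ S) (hab : a ≠ b) (hfab : f a = f b) :
    (S.image f).card < S.card := by
  rcases lt_or_eq_of_le (Finset.card_image_le (s := S) (f := f)) with h | h
  · exact h
  · exact absurd (Finset.card_image_iff.mp h ha hb hfab) hab

lemma compress_bound {Q A : Type*} [Fintype Q] [DecidableEq Q]
    (δ : Q → A → Q) (hsync : ∃ w : List A, (img δ w).card = 1)
    (S : Finset Q) (hS : 2 ≤ S.card) :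
    ∃ w : List A, w.length ≤ Nat.choose (Fintype.card Q - S.card + 2) 2 ∧
      (S.image (fun q => actW δ q w)).card < S.card := by
  classical
  have hex : ∃ n : ℕ, ∃ w : List A, w.length = n ∧
      (S.image (fun q => actW δ q w)).card < S.card := by
    obtain ⟨w0, hw0⟩ := hsync
    refine ⟨w0.length, w0, rfl, ?_⟩
    have hsub : S.image (fun q => actW δ q w0) ⊆ img δ w0 :=
      Finset.image_subset_image (Finset.subset_univ S)
    have := Finset.card_le_card hsub
    omega
  set k := Nat.find hex with hk
  obtain ⟨w, hwlen, hwc⟩ := Nat.find_spec hex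
  rw [← hk] at hwlen
  have hmin : ∀ l : ℕ, l < k → ∀ v : List A, v.length = l →
      ¬ (S.image (fun q => actW δ q v)).card < S.card := by
    intro l hl v hv
    have := Nat.find_min hex hl
    push_neg at this
    exact fun hc => absurd (this v hv) (by simp [hc])
  set T : Fin k → Finset Q := fun i => S.image (fun q => actW δ q (w.take i)) with hT
  have hTcard : ∀ i : Fin k, (T i).card = S.card := by
    intro i
    rcases lt_or_eq_of_le (Finset.card_image_le (s := S) (f := fun q => actW δ q (w.take i)))
      with h | h
    · exfalso
      exact hmin i.1 i.2 (w.take i)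
        (by have := i.2; simp only [List.length_take, hwlen]; omega) h
    · exact h
  have hTdrop : ∀ i : Fin k,
      ((T i).image (fun q => actW δ q (w.drop i))).card < S.card := by
    intro i
    rw [hT]
    rw [← image_actW_append, List.take_append_drop]
    exact hwc
  have hpairs : ∀ i : Fin k, ∃ pq : Q × Q, pq.1 ∈ T i ∧ pq.2 ∈ T i ∧ pq.1 ≠ pq.2 ∧
      actW δ pq.1 (w.drop i) = actW δ pq.2 (w.drop i) := by
    intro i
    have h1 := hTdrop i
    rw [← hTcard i] at h1
    have h2 : ¬ Set.InjOn (fun q => actW δ q (w.drop i)) (T i) := by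
      intro hinj
      rw [Finset.card_image_of_injOn hinj] at h1
      omega
    rw [Set.InjOn] at h2
    push_neg at h2
    obtain ⟨a, ha, b, hb, hab, hne⟩ := h2
    exact ⟨(a, b), ha, hb, hne, hab⟩
  choose pq hp hq hne hmerge using hpairs
  have hskew : ∀ i j : Fin k, i < j → (pq j).1 ∉ T i ∨ (pq j).2 ∉ T i := by
    intro i j hij
    by_contra hcon
    push_neg at hcon
    obtain ⟨h1, h2⟩ := hcon
    have hlt : ((T i).image (fun q => actW δ q (w.drop j))).card < S.card := by
      rw [← hTcard i]
      exact card_image_lt h1 h2 (hne j) (hmerge j)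
    have hw' : (S.image (fun q => actW δ q (w.take i ++ w.drop j))).card < S.card := by
      rw [image_actW_append]
      exact hlt
    have hik := i.2
    have hjk := j.2
    have hij' : (i : ℕ) < (j : ℕ) := hij
    have hlen : (w.take i ++ w.drop j).length = i.1 + (w.length - j.1) := by
      simp only [List.length_append, List.length_take, List.length_drop, hwlen]; omega
    refine hmin (i.1 + (w.length - j.1)) ?_ _ hlen hw'
    rw [hwlen]
    omega
  have hfrankl := frankl_pairs T (fun i => (pq i).1) (fun i => (pq i).2)
    (fun i => by rw [Finset.card_compl, hTcard i]) hp hq hskew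
  exact ⟨w, by rw [hwlen]; exact hfrankl, hwc⟩

lemma sum_choose_id (n : ℕ) :
    ∑ m ∈ Finset.Icc 2 n, Nat.choose (n - m + 2) 2 = (n ^ 3 - n) / 6 := by
  have h1 : ∑ m ∈ Finset.Icc 2 n, Nat.choose (n - m + 2) 2
      = ∑ j ∈ Finset.Icc 2 n, Nat.choose j 2 := by
    refine Finset.sum_nbij' (fun m => n + 2 - m) (fun j => n + 2 - j) ?_ ?_ ?_ ?_ ?_ <;>
      intro a ha <;> simp only [Finset.mem_Icc] at * <;> first | omega | (congr 1; omega)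
  rw [h1, Nat.sum_Icc_choose, Nat.choose_eq_descFactorial_div_factorial]
  have h3 : Nat.factorial 3 = 6 := rfl
  rw [h3]
  congr 1
  show (n+1).descFactorial 3 = n ^ 3 - n
  simp only [Nat.descFactorial_succ, Nat.descFactorial_zero, Nat.mul_one, Nat.sub_zero]
  cases n with
  | zero => rfl
  | succ m =>
    have e1 : m + 1 + 1 - 2 = m := by omega
    have e2 : m + 1 + 1 - 1 = m + 1 := by omega
    rw [e1, e2]
    have h4 : (m + 1) ^ 3 = m * ((m + 1) * (m + 1 + 1)) + (m + 1) := by ring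
    omega

lemma greedy_rec {Q A : Type*} [Fintype Q] [DecidableEq Q]
    (δ : Q → A → Q) (hsync : ∃ w : List A, (img δ w).card = 1) :
    ∀ c : ℕ, ∀ u : List A, (img δ u).card ≤ c →
      ∃ v : List A, (img δ (u ++ v)).card = 1 ∧
        v.length ≤ ∑ m ∈ Finset.Icc 2 c, Nat.choose (Fintype.card Q - m + 2) 2 := by
  have hQ : Nonempty Q := by
    obtain ⟨w, hw⟩ := hsync
    by_contra h
    rw [not_nonempty_iff] at h
    rw [img, Finset.univ_eq_empty, Finset.image_empty] at hw
    simp at hw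
  intro c
  induction c using Nat.strong_induction_on with
  | _ c ih =>
    intro u hu
    have hpos : 1 ≤ (img δ u).card := by
      rw [Nat.one_le_iff_ne_zero, ← Nat.pos_iff_ne_zero, Finset.card_pos]
      exact (Finset.univ_nonempty).image _
    rcases le_or_gt (img δ u).card 1 with h1 | h1
    · exact ⟨[], by rw [List.append_nil]; omega, by simp⟩
    · set m := (img δ u).card with hm
      obtain ⟨w, hwlen, hwc⟩ := compress_bound δ hsync (img δ u) h1
      rw [← hm] at hwlen hwc
      have hcm : (img δ (u ++ w)).card ≤ m - 1 := by
        rw [img_append]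
        omega
      have hm1c : m - 1 < c := by omega
      obtain ⟨v, hv1, hv2⟩ := ih (m - 1) hm1c (u ++ w) hcm
      refine ⟨w ++ v, by rw [← List.append_assoc]; exact hv1, ?_⟩
      have hsum : ∑ m' ∈ Finset.Icc 2 (m - 1), Nat.choose (Fintype.card Q - m' + 2) 2
            + Nat.choose (Fintype.card Q - m + 2) 2
          = ∑ m' ∈ Finset.Icc 2 m, Nat.choose (Fintype.card Q - m' + 2) 2 := by
        have hm2 : m = (m - 1) + 1 := by omega
        rw [hm2, Finset.sum_Icc_succ_top (by omega), ← hm2]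
      have hsub : ∑ m' ∈ Finset.Icc 2 m, Nat.choose (Fintype.card Q - m' + 2) 2
          ≤ ∑ m' ∈ Finset.Icc 2 c, Nat.choose (Fintype.card Q - m' + 2) 2 :=
        Finset.sum_le_sum_of_subset (Finset.Icc_subset_Icc_right (by omega))
      rw [List.length_append]
      omega

/-- Correctness of the greedy compressing algorithm: every subset of size ≥ 2
admits a compressing word of length ≤ C(n-|S|+2, 2); summing these bounds over
m = 2..n gives (n^3-n)/6, so the greedy algorithm yields a reset word of length
at most (n^3-n)/6. -/
theorem greedy_compressing_bound {Q A : Type*} [Fintype Q] [DecidableEq Q]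
    (δ : Q → A → Q) (hsync : ∃ w : List A, (img δ w).card = 1) :
    (∀ S : Finset Q, 2 ≤ S.card →
      ∃ w : List A, w.length ≤ Nat.choose (Fintype.card Q - S.card + 2) 2 ∧
        (S.image (fun q => actW δ q w)).card < S.card) ∧
    (∑ m ∈ Finset.Icc 2 (Fintype.card Q), Nat.choose (Fintype.card Q - m + 2) 2
      = (Fintype.card Q ^ 3 - Fintype.card Q) / 6) ∧
    (∃ w : List A, (img δ w).card = 1 ∧
      w.length ≤ (Fintype.card Q ^ 3 - Fintype.card Q) / 6) := by
  refine ⟨fun S hS => compress_bound δ hsync S hS, sum_choose_id _, ?_⟩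
  have hinit : (img δ ([] : List A)).card ≤ Fintype.card Q := by
    rw [img]
    exact Finset.card_image_le.trans (by simp)
  obtain ⟨v, hv1, hv2⟩ := greedy_rec δ hsync (Fintype.card Q) [] hinit
  rw [List.nil_append] at hv1
  exact ⟨v, hv1, hv2.trans_eq (sum_choose_id _)⟩
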